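/- Let G be a finite simple isolate-free graph with maximum degree Δ(G) = 3, let Ψ be a total coalition partition of G with 6 classes (the maximum possible, since TC(G) ≤ 6 when Δ(G) = 3), and suppose that V₁, V₂, V₃, V₄, V₅, V₆ are the six classes of Ψ forming a 6-cycle in the total coalition graph TCG(G,Ψ) (i.e., V₁V₂, V₂V₃, V₃V₄, V₄V₅, V₅V₆, V₆V₁ are all total coalitions). Then TCG(G,Ψ) is isomorphic to the complete bipartite graph K₃,₃. -/

import Mathlib

open scoped Classical

variable {V : Type*}

/-- `S` is a total dominating set of `G`: every vertex of `G` has a neighbor in `S`. -/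
def TotalDomSet (G : SimpleGraph V) (S : Finset V) : Prop :=
  ∀ v : V, ∃ u ∈ S, G.Adj v u

/-- Two disjoint sets `A`, `B` form a total coalition in `G` if neither is a total
dominating set but their union is. -/
def TotalCoalition [DecidableEq V] (G : SimpleGraph V) (A B : Finset V) : Prop :=
  Disjoint A B ∧ ¬ TotalDomSet G A ∧ ¬ TotalDomSet G B ∧ TotalDomSet G (A ∪ B)

/-- A graph is isolate-free if every vertex has a neighbor. -/
def IsolateFree (G : SimpleGraph V) : Prop :=
  ∀ v : V, ∃ u : V, G.Adj v u

/-- `Ψ` is a total coalition partition of `G`: a partition of the vertex set into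
nonempty classes, none of which is a total dominating set, such that every class
forms a total coalition with at least one other class. -/
def IsTCPartition [DecidableEq V] (G : SimpleGraph V) (Ψ : Finset (Finset V)) : Prop :=
  (∀ C ∈ Ψ, C.Nonempty) ∧
  (∀ v : V, ∃! C, C ∈ Ψ ∧ v ∈ C) ∧
  (∀ C ∈ Ψ, ¬ TotalDomSet G C) ∧
  (∀ C ∈ Ψ, ∃ D ∈ Ψ, D ≠ C ∧ TotalCoalition G C D)

/-- The total coalition graph `TCG(G,Ψ)`: vertices are the classes of `Ψ`, and two
classes are adjacent iff they form a total coalition. -/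
def TCG [DecidableEq V] (G : SimpleGraph V) (Ψ : Finset (Finset V)) :
    SimpleGraph {C // C ∈ Ψ} where
  Adj C D := C ≠ D ∧ TotalCoalition G (C : Finset V) (D : Finset V)
  symm := by
    refine ⟨?_⟩
    rintro C D ⟨hne, hd, hA, hB, hU⟩
    exact ⟨hne.symm, hd.symm, hB, hA, by rwa [Finset.union_comm]⟩
  loopless := by refine ⟨?_⟩; rintro C ⟨hne, _⟩; exact hne rfl

/-- Auxiliary map used to build the isomorphism. -/
def gfun {α : Type*} (a b c d e f : α) : Fin 3 ⊕ Fin 3 → α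
  | .inl i => if i = 0 then a else if i = 1 then c else e
  | .inr i => if i = 0 then b else if i = 1 then d else f

@[simp] lemma gfun_inl0 {α : Type*} (a b c d e f : α) : gfun a b c d e f (.inl 0) = a := rfl
@[simp] lemma gfun_inl1 {α : Type*} (a b c d e f : α) : gfun a b c d e f (.inl 1) = c := rfl
@[simp] lemma gfun_inl2 {α : Type*} (a b c d e f : α) : gfun a b c d e f (.inl 2) = e := rfl
@[simp] lemma gfun_inr0 {α : Type*} (a b c d e f : α) : gfun a b c d e f (.inr 0) = b := rfl
@[simp] lemma gfun_inr1 {α : Type*} (a b c d e f : α) : gfun a b c d e f (.inr 1) = d := rfl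
@[simp] lemma gfun_inr2 {α : Type*} (a b c d e f : α) : gfun a b c d e f (.inr 2) = f := rfl

/-- Auxiliary inverse map used to build the isomorphism. -/
noncomputable def ffun {β : Type*} (w1 w2 w3 w4 w5 : β) (S : β) : Fin 3 ⊕ Fin 3 :=
  if S = w1 then .inl 0 else if S = w3 then .inl 1 else if S = w5 then .inl 2
  else if S = w2 then .inr 0 else if S = w4 then .inr 1 else .inr 2

/-- If `Δ(G) = 3` and a total coalition partition `Ψ` with `6` classes contains six
pairwise distinct classes forming a `6`-cycle in the total coalition graph, then
`TCG(G,Ψ)` is isomorphic to the complete bipartite graph `K₃,₃`. -/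
theorem statement_19 [Fintype V] [DecidableEq V]
    (G : SimpleGraph V) [DecidableRel G.Adj] (hG : IsolateFree G)
    (hΔ : G.maxDegree = 3)
    (Ψ : Finset (Finset V)) (hΨ : IsTCPartition G Ψ) (hcard : Ψ.card = 6)
    (V₁ V₂ V₃ V₄ V₅ V₆ : Finset V)
    (h1 : V₁ ∈ Ψ) (h2 : V₂ ∈ Ψ) (h3 : V₃ ∈ Ψ) (h4 : V₄ ∈ Ψ) (h5 : V₅ ∈ Ψ) (h6 : V₆ ∈ Ψ)
    (hdist : [V₁, V₂, V₃, V₄, V₅, V₆].Pairwise (· ≠ ·))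
    (h12 : TotalCoalition G V₁ V₂) (h23 : TotalCoalition G V₂ V₃)
    (h34 : TotalCoalition G V₃ V₄) (h45 : TotalCoalition G V₄ V₅)
    (h56 : TotalCoalition G V₅ V₆) (h61 : TotalCoalition G V₆ V₁) :
    Nonempty (TCG G Ψ ≃g completeBipartiteGraph (Fin 3) (Fin 3)) := by
  classical
  obtain ⟨hΨne, hΨuniq, hΨntd, -⟩ := hΨ
  -- extract the pairwise distinctness facts
  rw [List.pairwise_cons] at hdist
  obtain ⟨f1, hdist⟩ := hdist
  rw [List.pairwise_cons] at hdist
  obtain ⟨f2, hdist⟩ := hdist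
  rw [List.pairwise_cons] at hdist
  obtain ⟨f3, hdist⟩ := hdist
  rw [List.pairwise_cons] at hdist
  obtain ⟨f4, hdist⟩ := hdist
  rw [List.pairwise_cons] at hdist
  obtain ⟨f5, hdist⟩ := hdist
  have n12 : V₁ ≠ V₂ := f1 V₂ (by simp)
  have n13 : V₁ ≠ V₃ := f1 V₃ (by simp)
  have n14 : V₁ ≠ V₄ := f1 V₄ (by simp)
  have n15 : V₁ ≠ V₅ := f1 V₅ (by simp)
  have n16 : V₁ ≠ V₆ := f1 V₆ (by simp)
  have n23 : V₂ ≠ V₃ := f2 V₃ (by simp)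
  have n24 : V₂ ≠ V₄ := f2 V₄ (by simp)
  have n25 : V₂ ≠ V₅ := f2 V₅ (by simp)
  have n26 : V₂ ≠ V₆ := f2 V₆ (by simp)
  have n34 : V₃ ≠ V₄ := f3 V₄ (by simp)
  have n35 : V₃ ≠ V₅ := f3 V₅ (by simp)
  have n36 : V₃ ≠ V₆ := f3 V₆ (by simp)
  have n45 : V₄ ≠ V₅ := f4 V₅ (by simp)
  have n46 : V₄ ≠ V₆ := f4 V₆ (by simp)
  have n56 : V₅ ≠ V₆ := f5 V₆ (by simp)
  have m21 := n12.symm; have m31 := n13.symm; have m41 := n14.symm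
  have m51 := n15.symm; have m61 := n16.symm; have m32 := n23.symm
  have m42 := n24.symm; have m52 := n25.symm; have m62 := n26.symm
  have m43 := n34.symm; have m53 := n35.symm; have m63 := n36.symm
  have m54 := n45.symm; have m64 := n46.symm; have m65 := n56.symm
  -- distinct classes are disjoint
  have hdisj : ∀ A ∈ Ψ, ∀ B ∈ Ψ, A ≠ B → Disjoint A B := by
    intro A hA B hB hAB
    rw [Finset.disjoint_left]
    intro v hvA hvB
    obtain ⟨C, hC, hC'⟩ := hΨuniq v
    exact hAB ((hC' A ⟨hA, hvA⟩).trans (hC' B ⟨hB, hvB⟩).symm)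
  -- Ψ consists exactly of the six classes
  have hc6 : ({V₁, V₂, V₃, V₄, V₅, V₆} : Finset (Finset V)).card = 6 := by
    rw [Finset.card_insert_of_notMem (by simp [n12, n13, n14, n15, n16]),
      Finset.card_insert_of_notMem (by simp [n23, n24, n25, n26]),
      Finset.card_insert_of_notMem (by simp [n34, n35, n36]),
      Finset.card_insert_of_notMem (by simp [n45, n46]),
      Finset.card_insert_of_notMem (by simp [n56]), Finset.card_singleton]
  have hT : ({V₁, V₂, V₃, V₄, V₅, V₆} : Finset (Finset V)) = Ψ := by
    apply Finset.eq_of_subset_of_card_le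
    · intro C hC
      simp only [Finset.mem_insert, Finset.mem_singleton] at hC
      rcases hC with rfl | rfl | rfl | rfl | rfl | rfl <;> assumption
    · rw [hcard, hc6]
  -- no vertex has neighbors in four distinct classes
  have hfour : ∀ (v : V) (A B C D : Finset V), A ∈ Ψ → B ∈ Ψ → C ∈ Ψ → D ∈ Ψ →
      A ≠ B → A ≠ C → A ≠ D → B ≠ C → B ≠ D → C ≠ D →
      (∃ u ∈ A, G.Adj v u) → (∃ u ∈ B, G.Adj v u) → (∃ u ∈ C, G.Adj v u) →
      (∃ u ∈ D, G.Adj v u) → False := by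
    intro v A B C D hA hB hC hD nAB nAC nAD nBC nBD nCD hbA hbB hbC hbD
    obtain ⟨a, ha, haa⟩ := hbA
    obtain ⟨b, hb, hbb⟩ := hbB
    obtain ⟨c, hc, hcc⟩ := hbC
    obtain ⟨d, hd, hdd⟩ := hbD
    have hab : a ≠ b := fun h => Finset.disjoint_left.mp (hdisj A hA B hB nAB) ha (h ▸ hb)
    have hac : a ≠ c := fun h => Finset.disjoint_left.mp (hdisj A hA C hC nAC) ha (h ▸ hc)
    have had : a ≠ d := fun h => Finset.disjoint_left.mp (hdisj A hA D hD nAD) ha (h ▸ hd)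
    have hbc : b ≠ c := fun h => Finset.disjoint_left.mp (hdisj B hB C hC nBC) hb (h ▸ hc)
    have hbd : b ≠ d := fun h => Finset.disjoint_left.mp (hdisj B hB D hD nBD) hb (h ▸ hd)
    have hcd : c ≠ d := fun h => Finset.disjoint_left.mp (hdisj C hC D hD nCD) hc (h ▸ hd)
    have hsub : ({a, b, c, d} : Finset V) ⊆ G.neighborFinset v := by
      intro x hx
      simp only [Finset.mem_insert, Finset.mem_singleton] at hx
      rcases hx with rfl | rfl | rfl | rfl <;> simp [SimpleGraph.mem_neighborFinset, *]
    have hcard4 : ({a, b, c, d} : Finset V).card = 4 := by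
      rw [Finset.card_insert_of_notMem (by simp [hab, hac, had]),
        Finset.card_insert_of_notMem (by simp [hbc, hbd]),
        Finset.card_insert_of_notMem (by simp [hcd]), Finset.card_singleton]
    have hle := Finset.card_le_card hsub
    rw [hcard4] at hle
    have hdeg := G.degree_le_maxDegree v
    rw [hΔ] at hdeg
    rw [show (G.neighborFinset v).card = G.degree v from rfl] at hle
    omega
  -- the dichotomy: every vertex has its neighbors in exactly the odd or exactly the even classes
  have hdich : ∀ v : V,
      ((∃ u ∈ V₁, G.Adj v u) ∧ (∃ u ∈ V₃, G.Adj v u) ∧ (∃ u ∈ V₅, G.Adj v u) ∧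
        ¬(∃ u ∈ V₂, G.Adj v u) ∧ ¬(∃ u ∈ V₄, G.Adj v u) ∧ ¬(∃ u ∈ V₆, G.Adj v u)) ∨
      ((∃ u ∈ V₂, G.Adj v u) ∧ (∃ u ∈ V₄, G.Adj v u) ∧ (∃ u ∈ V₆, G.Adj v u) ∧
        ¬(∃ u ∈ V₁, G.Adj v u) ∧ ¬(∃ u ∈ V₃, G.Adj v u) ∧ ¬(∃ u ∈ V₅, G.Adj v u)) := by
    intro v
    have cover : ∀ A B : Finset V, TotalCoalition G A B →
        (∃ u ∈ A, G.Adj v u) ∨ (∃ u ∈ B, G.Adj v u) := by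
      intro A B hAB
      obtain ⟨u, hu, ha⟩ := hAB.2.2.2 v
      rcases Finset.mem_union.mp hu with h | h
      · exact Or.inl ⟨u, h, ha⟩
      · exact Or.inr ⟨u, h, ha⟩
    have c12 := cover _ _ h12
    have c23 := cover _ _ h23
    have c34 := cover _ _ h34
    have c45 := cover _ _ h45
    have c56 := cover _ _ h56
    have c61 := cover _ _ h61
    have q1234 := hfour v V₁ V₂ V₃ V₄ h1 h2 h3 h4 n12 n13 n14 n23 n24 n34
    have q1235 := hfour v V₁ V₂ V₃ V₅ h1 h2 h3 h5 n12 n13 n15 n23 n25 n35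
    have q1245 := hfour v V₁ V₂ V₄ V₅ h1 h2 h4 h5 n12 n14 n15 n24 n25 n45
    have q1246 := hfour v V₁ V₂ V₄ V₆ h1 h2 h4 h6 n12 n14 n16 n24 n26 n46
    have q1345 := hfour v V₁ V₃ V₄ V₅ h1 h3 h4 h5 n13 n14 n15 n34 n35 n45
    have q1346 := hfour v V₁ V₃ V₄ V₆ h1 h3 h4 h6 n13 n14 n16 n34 n36 n46
    have q1356 := hfour v V₁ V₃ V₅ V₆ h1 h3 h5 h6 n13 n15 n16 n35 n36 n56
    have q1235' := hfour v V₁ V₂ V₃ V₅ h1 h2 h3 h5 n12 n13 n15 n23 n25 n35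
    have q2346 := hfour v V₂ V₃ V₄ V₆ h2 h3 h4 h6 n23 n24 n26 n34 n36 n46
    have q2356 := hfour v V₂ V₃ V₅ V₆ h2 h3 h5 h6 n23 n25 n26 n35 n36 n56
    have q2456 := hfour v V₂ V₄ V₅ V₆ h2 h4 h5 h6 n24 n25 n26 n45 n46 n56
    by_cases b1 : ∃ u ∈ V₁, G.Adj v u
    · by_cases b2 : ∃ u ∈ V₂, G.Adj v u
      · exfalso
        rcases c34 with b3 | b4
        · rcases c45 with b4 | b5
          · exact q1234 b1 b2 b3 b4
          · exact q1235 b1 b2 b3 b5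
        · rcases c56 with b5 | b6
          · exact q1245 b1 b2 b4 b5
          · exact q1246 b1 b2 b4 b6
      · have b3 := c23.resolve_left b2
        have b5 : ∃ u ∈ V₅, G.Adj v u := by
          rcases c45 with b4 | b5
          · exfalso
            rcases c56 with b5 | b6
            · exact q1345 b1 b3 b4 b5
            · exact q1346 b1 b3 b4 b6
          · exact b5
        exact Or.inl ⟨b1, b3, b5, b2, fun b4 => q1345 b1 b3 b4 b5, fun b6 => q1356 b1 b3 b5 b6⟩
    · have b2 := c12.resolve_left b1
      have b6 := c61.resolve_right b1
      have b4 : ∃ u ∈ V₄, G.Adj v u := by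
        rcases c34 with b3 | b4
        · exfalso
          rcases c45 with b4 | b5
          · exact q2346 b2 b3 b4 b6
          · exact q2356 b2 b3 b5 b6
        · exact b4
      exact Or.inr ⟨b2, b4, b6, b1, fun b3 => q2346 b2 b3 b4 b6, fun b5 => q2456 b2 b4 b5 b6⟩
  -- there is a vertex of each type
  have hvE : ∃ v : V, ¬(∃ u ∈ V₁, G.Adj v u) ∧ ¬(∃ u ∈ V₃, G.Adj v u) ∧
      ¬(∃ u ∈ V₅, G.Adj v u) := by
    by_contra h
    rw [not_exists] at h
    refine hΨntd V₁ h1 (fun v => ?_)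
    rcases hdich v with hL | hR
    · exact hL.1
    · exact absurd ⟨hR.2.2.2.1, hR.2.2.2.2.1, hR.2.2.2.2.2⟩ (h v)
  have hvO : ∃ v : V, ¬(∃ u ∈ V₂, G.Adj v u) ∧ ¬(∃ u ∈ V₄, G.Adj v u) ∧
      ¬(∃ u ∈ V₆, G.Adj v u) := by
    by_contra h
    rw [not_exists] at h
    refine hΨntd V₂ h2 (fun v => ?_)
    rcases hdich v with hL | hR
    · exact absurd ⟨hL.2.2.2.1, hL.2.2.2.2.1, hL.2.2.2.2.2⟩ (h v)
    · exact hR.1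
  -- odd and even classes
  set Odd3 : Finset V → Prop := fun A => A = V₁ ∨ A = V₃ ∨ A = V₅ with hOdd3
  set Even3 : Finset V → Prop := fun A => A = V₂ ∨ A = V₄ ∨ A = V₆ with hEven3
  have hOmem : ∀ A, Odd3 A → A ∈ Ψ := by rintro A (rfl | rfl | rfl) <;> assumption
  have hEmem : ∀ A, Even3 A → A ∈ Ψ := by rintro A (rfl | rfl | rfl) <;> assumption
  have hOEne : ∀ A B, Odd3 A → Even3 B → A ≠ B := by
    rintro A B (rfl | rfl | rfl) (rfl | rfl | rfl)
    exacts [n12, n14, n16, n23.symm, n34, n36, n25.symm, n45.symm, n56]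
  -- odd-even pairs are coalitions
  have hOE : ∀ A B, Odd3 A → Even3 B → TotalCoalition G A B := by
    intro A B hA hB
    refine ⟨hdisj A (hOmem A hA) B (hEmem B hB) (hOEne A B hA hB),
      hΨntd A (hOmem A hA), hΨntd B (hEmem B hB), fun v => ?_⟩
    rcases hdich v with hL | hR
    · obtain ⟨u, hu, ha⟩ : ∃ u ∈ A, G.Adj v u := by
        rcases hA with rfl | rfl | rfl
        exacts [hL.1, hL.2.1, hL.2.2.1]
      exact ⟨u, Finset.mem_union_left _ hu, ha⟩
    · obtain ⟨u, hu, ha⟩ : ∃ u ∈ B, G.Adj v u := by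
        rcases hB with rfl | rfl | rfl
        exacts [hR.1, hR.2.1, hR.2.2.1]
      exact ⟨u, Finset.mem_union_right _ hu, ha⟩
  -- same-parity pairs do not dominate
  have hOO : ∀ A B, Odd3 A → Odd3 B → ¬ TotalDomSet G (A ∪ B) := by
    intro A B hA hB htd
    obtain ⟨v, hv1, hv3, hv5⟩ := hvE
    obtain ⟨u, hu, ha⟩ := htd v
    have : ∀ C, Odd3 C → u ∈ C → False := by
      rintro C (rfl | rfl | rfl) hC
      exacts [hv1 ⟨u, hC, ha⟩, hv3 ⟨u, hC, ha⟩, hv5 ⟨u, hC, ha⟩]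
    rcases Finset.mem_union.mp hu with h | h
    · exact this A hA h
    · exact this B hB h
  have hEE : ∀ A B, Even3 A → Even3 B → ¬ TotalDomSet G (A ∪ B) := by
    intro A B hA hB htd
    obtain ⟨v, hv2, hv4, hv6⟩ := hvO
    obtain ⟨u, hu, ha⟩ := htd v
    have : ∀ C, Even3 C → u ∈ C → False := by
      rintro C (rfl | rfl | rfl) hC
      exacts [hv2 ⟨u, hC, ha⟩, hv4 ⟨u, hC, ha⟩, hv6 ⟨u, hC, ha⟩]
    rcases Finset.mem_union.mp hu with h | h
    · exact this A hA h
    · exact this B hB h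
  -- build the isomorphism
  let g : Fin 3 ⊕ Fin 3 → {C // C ∈ Ψ} :=
    gfun ⟨V₁, h1⟩ ⟨V₂, h2⟩ ⟨V₃, h3⟩ ⟨V₄, h4⟩ ⟨V₅, h5⟩ ⟨V₆, h6⟩
  let f : {C // C ∈ Ψ} → Fin 3 ⊕ Fin 3 := fun C => ffun V₁ V₂ V₃ V₄ V₅ (C : Finset V)
  have godd : ∀ i : Fin 3, Odd3 ((g (.inl i) : {C // C ∈ Ψ}) : Finset V) := by
    intro i
    fin_cases i <;> simp [g, hOdd3]
  have geven : ∀ i : Fin 3, Even3 ((g (.inr i) : {C // C ∈ Ψ}) : Finset V) := by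
    intro i
    fin_cases i <;> simp [g, hEven3]
  have hleft : ∀ x : Fin 3 ⊕ Fin 3, f (g x) = x := by
    rintro (i | i) <;> fin_cases i <;>
      simp [f, g, ffun, gfun, n12, n13, n14, n15, n16, n23, n24, n25, n26, n34, n35, n36,
        n45, n46, n56, m21, m31, m41, m51, m61, m32, m42, m52, m62, m43, m53, m63, m54,
        m64, m65]
  have hright : ∀ C : {C // C ∈ Ψ}, g (f C) = C := by
    rintro ⟨C, hC⟩
    rw [← hT] at hC
    simp only [Finset.mem_insert, Finset.mem_singleton] at hC
    rcases hC with rfl | rfl | rfl | rfl | rfl | rfl <;>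
      simp [f, g, ffun, gfun, n12, n13, n14, n15, n16, n23, n24, n25, n26, n34, n35, n36,
        n45, n46, n56, m21, m31, m41, m51, m61, m32, m42, m52, m62, m43, m53, m63, m54,
        m64, m65]
  have kbll : ∀ i j : Fin 3, ¬ (completeBipartiteGraph (Fin 3) (Fin 3)).Adj (.inl i) (.inl j) := by
    rintro i j (⟨-, h⟩ | ⟨h, -⟩) <;> simp at h
  have kbrr : ∀ i j : Fin 3, ¬ (completeBipartiteGraph (Fin 3) (Fin 3)).Adj (.inr i) (.inr j) := by
    rintro i j (⟨h, -⟩ | ⟨-, h⟩) <;> simp at h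
  have kblr : ∀ i j : Fin 3, (completeBipartiteGraph (Fin 3) (Fin 3)).Adj (.inl i) (.inr j) :=
    fun i j => Or.inl ⟨rfl, rfl⟩
  have kbrl : ∀ i j : Fin 3, (completeBipartiteGraph (Fin 3) (Fin 3)).Adj (.inr i) (.inl j) :=
    fun i j => Or.inr ⟨rfl, rfl⟩
  have hiff : ∀ x y : Fin 3 ⊕ Fin 3, (TCG G Ψ).Adj (g x) (g y) ↔
      (completeBipartiteGraph (Fin 3) (Fin 3)).Adj x y := by
    rintro (i | i) (j | j)
    · exact iff_of_false (fun h => hOO _ _ (godd i) (godd j) h.2.2.2.2) (kbll i j)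
    · refine iff_of_true ?_ (kblr i j)
      exact ⟨fun h => hOEne _ _ (godd i) (geven j) (congrArg Subtype.val h),
        hOE _ _ (godd i) (geven j)⟩
    · refine iff_of_true ?_ (kbrl i j)
      have hco := hOE _ _ (godd j) (geven i)
      refine ⟨fun h => hOEne _ _ (godd j) (geven i) (congrArg Subtype.val h).symm, ?_⟩
      exact ⟨(hco.1).symm, hco.2.2.1, hco.2.1, by rw [Finset.union_comm]; exact hco.2.2.2⟩
    · exact iff_of_false (fun h => hEE _ _ (geven i) (geven j) h.2.2.2.2) (kbrr i j)
  exact ⟨(SimpleGraph.Iso.symm ⟨⟨g, f, hleft, hright⟩, fun {x y} => hiff x y⟩)⟩
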